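/- Let V be a finite-dimensional real inner product space, b ∈ V with ‖b‖ = 1, g ∈ ℝ with |g| < 2, h = √(1 − g²/4), and let q, A, B, λ be as in the Finsleroid setting. Then for y₁ with q(y₁) > 0 and nonzero y₂, the derivative of y ↦ λ(y, y₂) at y₁ applied to the vector b equals A(y₂)/√(B(y₁)B(y₂)) − λ(y₁,y₂)·A(y₁)/B(y₁). -/

import Mathlib

open scoped InnerProductSpace

/-- In the Finsleroid setting, for `y₁` with `q(y₁) > 0` and nonzero `y₂`,
the derivative of `y ↦ λ(y, y₂)` at `y₁` applied to the axis vector `b` equals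
`A(y₂)/√(B(y₁)B(y₂)) − λ(y₁,y₂)·A(y₁)/B(y₁)`. -/
theorem finsleroid_lambda_derivative_along_axis
    {V : Type*} [NormedAddCommGroup V] [InnerProductSpace ℝ V] [FiniteDimensional ℝ V]
    (b : V) (hb : ‖b‖ = 1) (g h : ℝ) (hg : |g| < 2)
    (hh : h = Real.sqrt (1 - g ^ 2 / 4))
    (q A B : V → ℝ) (lam : V → V → ℝ)
    (hq : ∀ y : V, q y = Real.sqrt (‖y‖ ^ 2 - ⟪b, y⟫_ℝ ^ 2))
    (hA : ∀ y : V, A y = ⟪b, y⟫_ℝ + (g / 2) * q y)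
    (hB : ∀ y : V, B y = ⟪b, y⟫_ℝ ^ 2 + g * ⟪b, y⟫_ℝ * q y + q y ^ 2)
    (hlam : ∀ y₁ y₂ : V, y₁ ≠ 0 → y₂ ≠ 0 →
      lam y₁ y₂ = (A y₁ * A y₂ + h ^ 2 * (⟪y₁, y₂⟫_ℝ - ⟪b, y₁⟫_ℝ * ⟪b, y₂⟫_ℝ))
        / Real.sqrt (B y₁ * B y₂)) :
    ∀ y₁ y₂ : V, 0 < q y₁ → y₂ ≠ 0 →
      fderiv ℝ (fun y => lam y y₂) y₁ b
        = A y₂ / Real.sqrt (B y₁ * B y₂) - lam y₁ y₂ * A y₁ / B y₁ := by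
  intro y₁ y₂ hq1 hy2
  have hbb : ⟪b, b⟫_ℝ = 1 := by
    rw [real_inner_self_eq_norm_sq, hb]; norm_num
  -- q as sqrt of inner-product expression (product form)
  have hqu : ∀ y : V, q y = Real.sqrt (⟪y, y⟫_ℝ - ⟪b, y⟫_ℝ * ⟪b, y⟫_ℝ) := fun y => by
    rw [hq y]; congr 1; rw [real_inner_self_eq_norm_sq]; ring
  have hu1 : 0 < ⟪y₁, y₁⟫_ℝ - ⟪b, y₁⟫_ℝ * ⟪b, y₁⟫_ℝ :=
    Real.sqrt_pos.mp (by rw [← hqu y₁]; exact hq1)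
  have hg4 : g ^ 2 < 4 := by
    have := abs_lt.mp hg; nlinarith [this.1, this.2]
  have hB1 : 0 < B y₁ := by
    have h1 : B y₁ = A y₁ ^ 2 + (1 - g ^ 2 / 4) * q y₁ ^ 2 := by rw [hA, hB]; ring
    nlinarith [sq_nonneg (A y₁), mul_pos hq1 hq1]
  have hu2 : (0:ℝ) ≤ ‖y₂‖ ^ 2 - ⟪b, y₂⟫_ℝ ^ 2 := by
    have h2 := abs_real_inner_le_norm b y₂
    rw [hb, one_mul] at h2
    nlinarith [sq_abs ⟪b, y₂⟫_ℝ, abs_nonneg ⟪b, y₂⟫_ℝ, norm_nonneg y₂]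
  have hq2sq : q y₂ ^ 2 = ‖y₂‖ ^ 2 - ⟪b, y₂⟫_ℝ ^ 2 := by rw [hq y₂]; exact Real.sq_sqrt hu2
  have hn2 : (0:ℝ) < ‖y₂‖ ^ 2 := by
    have h3 : (0:ℝ) < ‖y₂‖ := norm_pos_iff.mpr hy2
    positivity
  have hB2 : 0 < B y₂ := by
    rw [hB]
    nlinarith [sq_nonneg (⟪b, y₂⟫_ℝ + g / 2 * q y₂), sq_nonneg (q y₂ + g / 2 * ⟪b, y₂⟫_ℝ),
      hq2sq, hn2, hg4]
  have hBB : 0 < B y₁ * B y₂ := mul_pos hB1 hB2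
  have hs : 0 < Real.sqrt (B y₁ * B y₂) := Real.sqrt_pos.mpr hBB
  have hy1 : y₁ ≠ 0 := by
    intro h0; subst h0; simp at hu1
  -- derivative building blocks
  have hT : HasFDerivAt (fun y : V => ⟪b, y⟫_ℝ) (innerSL ℝ b) y₁ :=
    (innerSL ℝ b).hasFDerivAt
  have hNN : HasFDerivAt (fun y : V => ⟪y, y⟫_ℝ) _ y₁ :=
    (hasFDerivAt_id y₁).inner ℝ (hasFDerivAt_id y₁)
  have hW := hNN.sub (hT.mul hT)
  have hr := hW.sqrt hu1.ne'
  have hI : HasFDerivAt (fun y : V => ⟪y, y₂⟫_ℝ) _ y₁ :=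
    HasFDerivAt.inner ℝ (hasFDerivAt_id y₁) (hasFDerivAt_const (𝕜 := ℝ) y₂ y₁)
  have hA' := hT.add (hr.const_mul (g / 2))
  have hNum := (hA'.mul_const (A y₂)).add
    ((hI.sub (hT.mul_const ⟪b, y₂⟫_ℝ)).const_mul (h ^ 2))
  have hBex := ((hT.mul hT).add ((hT.const_mul g).mul hr)).add (hr.mul hr)
  have hBval : ⟪b, y₁⟫_ℝ * ⟪b, y₁⟫_ℝ
      + g * ⟪b, y₁⟫_ℝ * Real.sqrt (⟪y₁, y₁⟫_ℝ - ⟪b, y₁⟫_ℝ * ⟪b, y₁⟫_ℝ)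
      + Real.sqrt (⟪y₁, y₁⟫_ℝ - ⟪b, y₁⟫_ℝ * ⟪b, y₁⟫_ℝ)
        * Real.sqrt (⟪y₁, y₁⟫_ℝ - ⟪b, y₁⟫_ℝ * ⟪b, y₁⟫_ℝ) = B y₁ := by
    rw [hB, hqu]; ring
  have hDpos : (0:ℝ) < (⟪b, y₁⟫_ℝ * ⟪b, y₁⟫_ℝ
      + g * ⟪b, y₁⟫_ℝ * Real.sqrt (⟪y₁, y₁⟫_ℝ - ⟪b, y₁⟫_ℝ * ⟪b, y₁⟫_ℝ)
      + Real.sqrt (⟪y₁, y₁⟫_ℝ - ⟪b, y₁⟫_ℝ * ⟪b, y₁⟫_ℝ)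
        * Real.sqrt (⟪y₁, y₁⟫_ℝ - ⟪b, y₁⟫_ℝ * ⟪b, y₁⟫_ℝ)) * B y₂ := by
    rw [hBval]; exact hBB
  have hDen := (hBex.mul_const (B y₂)).sqrt hDpos.ne'
  have hsq := Real.sqrt_pos.mpr hDpos
  have hInv : HasFDerivAt (𝕜 := ℝ) (fun y : V => (Real.sqrt ((⟪b, y⟫_ℝ * ⟪b, y⟫_ℝ
      + g * ⟪b, y⟫_ℝ * Real.sqrt (⟪y, y⟫_ℝ - ⟪b, y⟫_ℝ * ⟪b, y⟫_ℝ)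
      + Real.sqrt (⟪y, y⟫_ℝ - ⟪b, y⟫_ℝ * ⟪b, y⟫_ℝ)
        * Real.sqrt (⟪y, y⟫_ℝ - ⟪b, y⟫_ℝ * ⟪b, y⟫_ℝ)) * B y₂))⁻¹) _ y₁ :=
    (hasDerivAt_inv hsq.ne').comp_hasFDerivAt y₁ hDen
  have hF := hNum.mul hInv
  -- local equality of `lam · y₂` with the explicit formula
  have hucont : Continuous (fun y : V => ⟪y, y⟫_ℝ - ⟪b, y⟫_ℝ * ⟪b, y⟫_ℝ) :=
    (continuous_id.inner continuous_id).sub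
      ((continuous_const.inner continuous_id).mul (continuous_const.inner continuous_id))
  have hmem : {y : V | 0 < ⟪y, y⟫_ℝ - ⟪b, y⟫_ℝ * ⟪b, y⟫_ℝ} ∈ nhds y₁ :=
    (isOpen_lt continuous_const hucont).mem_nhds hu1
  have hev : (fun y => lam y y₂) =ᶠ[nhds y₁]
      (fun y => ((⟪b, y⟫_ℝ + g / 2 * Real.sqrt (⟪y, y⟫_ℝ - ⟪b, y⟫_ℝ * ⟪b, y⟫_ℝ)) * A y₂
          + h ^ 2 * (⟪y, y₂⟫_ℝ - ⟪b, y⟫_ℝ * ⟪b, y₂⟫_ℝ))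
        * (Real.sqrt ((⟪b, y⟫_ℝ * ⟪b, y⟫_ℝ
          + g * ⟪b, y⟫_ℝ * Real.sqrt (⟪y, y⟫_ℝ - ⟪b, y⟫_ℝ * ⟪b, y⟫_ℝ)
          + Real.sqrt (⟪y, y⟫_ℝ - ⟪b, y⟫_ℝ * ⟪b, y⟫_ℝ)
            * Real.sqrt (⟪y, y⟫_ℝ - ⟪b, y⟫_ℝ * ⟪b, y⟫_ℝ)) * B y₂))⁻¹) := by
    filter_upwards [hmem] with y hy
    have hyne : y ≠ 0 := by
      intro h0; subst h0; simp at hy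
    rw [hlam y y₂ hyne hy2, hA y, hB y, hqu y, div_eq_mul_inv]
    ring_nf
  rw [hev.fderiv_eq]
  erw [hF.fderiv]
  simp only [ContinuousLinearMap.add_apply, ContinuousLinearMap.coe_smul', Pi.smul_apply,
    ContinuousLinearMap.coe_comp', Function.comp_apply, ContinuousLinearMap.coe_sub',
    Pi.sub_apply, ContinuousLinearMap.prod_apply, ContinuousLinearMap.coe_id', id_eq,
    ContinuousLinearMap.zero_apply, fderivInnerCLM_apply, innerSL_apply_apply, smul_eq_mul,
    ContinuousLinearMap.smul_apply, ContinuousLinearMap.sub_apply, ContinuousLinearMap.id_apply,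
    Pi.add_apply, Pi.mul_apply]
  rw [hBval, hlam y₁ y₂ hy1 hy2, hA y₁, hqu y₁, hbb, inner_zero_right, real_inner_comm y₁ b]
  set s := Real.sqrt (B y₁ * B y₂) with hs_def
  have hs2 : s ^ 2 = B y₁ * B y₂ := Real.sq_sqrt hBB.le
  have hB2' : B y₂ = s ^ 2 / B y₁ := by
    rw [eq_div_iff hB1.ne', hs2]; ring
  rw [hB2']
  have hne : √(⟪y₁, y₁⟫_ℝ - ⟪y₁, b⟫_ℝ * ⟪y₁, b⟫_ℝ) ≠ 0 :=
    Real.sqrt_ne_zero'.mpr (by rw [real_inner_comm b y₁]; linarith [hu1])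
  generalize √(⟪y₁, y₁⟫_ℝ - ⟪y₁, b⟫_ℝ * ⟪y₁, b⟫_ℝ) = t at hne ⊢
  field_simp
  ring
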